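/- If 0 < p < q − 1, then for any admissible x_0 the partial products ∏_{i=0}^n x_i = q^n x_0/(W_{n+1} + x_0 W_n) of the solution of x_{n+1} = q/(p + x_n) diverge (tend to infinity in absolute value). -/

import Mathlib

def W (p q : ℝ) : ℕ → ℝ
  | 0 => 0
  | 1 => 1
  | n + 2 => p * W p q (n + 1) + q * W p q n

theorem stmt_13 (p q : ℝ) (hp : 0 < p) (hq : 0 < q) (hpq : p < q - 1) (x : ℕ → ℝ)
    (hrec : ∀ n : ℕ, x (n + 1) = q / (p + x n))
    (hx0 : x 0 > 0) :
    Filter.Tendsto (fun n : ℕ => |∏ i ∈ Finset.range (n + 1), x i|)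
      Filter.atTop Filter.atTop := by
  have hδ : 0 < q - p - 1 := by linarith
  set t : ℝ := min ((q - p - 1)/2) (q/2) with ht
  have ht0 : 0 < t := lt_min (by linarith) (by linarith)
  have ht1 : t ≤ (q - p - 1)/2 := min_le_left _ _
  have ht2 : t ≤ q/2 := min_le_right _ _
  set r : ℝ := q - t with hr
  have hrq : r < q := by simp [hr]; linarith
  have hr0 : 0 < r := by simp [hr]; linarith
  have hroot : p * r + q ≤ r^2 := by nlinarith
  -- positivity of x
  have hxpos : ∀ n, 0 < x n := by
    intro n
    induction n with
    | zero => exact hx0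
    | succ n ih =>
      rw [hrec]
      exact div_pos hq (by linarith)
  -- denominator sequence
  set D : ℕ → ℝ := fun n => W p q (n+1) + x 0 * W p q n with hD
  have hD0 : D 0 = 1 := by simp [hD, W]
  have hD1 : D 1 = p + x 0 := by simp [hD, W]
  have hDrec : ∀ n, D (n+2) = p * D (n+1) + q * D n := by
    intro n
    have e1 : W p q (n+3) = p * W p q (n+2) + q * W p q (n+1) := by
      show W p q ((n+1)+2) = _; rw [W]
    have e2 : W p q (n+2) = p * W p q (n+1) + q * W p q n := by rw [W]
    show W p q (n+3) + x 0 * W p q (n+2) =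
      p * (W p q (n+2) + x 0 * W p q (n+1)) + q * (W p q (n+1) + x 0 * W p q n)
    rw [e1, e2]; ring
  have hDpos : ∀ n, 0 < D n := by
    have key : ∀ n, 0 < D n ∧ 0 < D (n+1) := by
      intro n
      induction n with
      | zero => exact ⟨by rw [hD0]; norm_num, by rw [hD1]; linarith⟩
      | succ n ih =>
        refine ⟨ih.2, ?_⟩
        rw [hDrec]
        nlinarith [ih.1, ih.2]
    exact fun n => (key n).1
  have hstep : ∀ n, (p + x n) * D n = D (n+1) := by
    intro n
    induction n with
    | zero => rw [hD0, hD1]; ring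
    | succ n ih =>
      have hpx : (0:ℝ) < p + x n := by have := hxpos n; linarith
      have hx1 : x (n+1) * D (n+1) = q * D n := by
        rw [hrec, ← ih]
        field_simp
      have := hDrec n
      nlinarith [hx1, this]
  have hxformula : ∀ n, x (n+1) = q * D n / D (n+1) := by
    intro n
    have hpx : (0:ℝ) < p + x n := by have := hxpos n; linarith
    rw [hrec, ← hstep n]
    rw [div_eq_div_iff hpx.ne' (mul_pos hpx (hDpos n)).ne']
    ring
  have hprod : ∀ n, ∏ i ∈ Finset.range (n+1), x i = q^n * x 0 / D n := by
    intro n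
    induction n with
    | zero => simp [hD0]
    | succ n ih =>
      rw [Finset.prod_range_succ, ih, hxformula n]
      have h1 := (hDpos n).ne'
      have h2 := (hDpos (n+1)).ne'
      field_simp
      ring
  -- geometric bound on D
  set C : ℝ := max 1 ((p + x 0)/r) with hC
  have hC0 : 0 < C := lt_of_lt_of_le one_pos (le_max_left _ _)
  have hCb0 : D 0 ≤ C := by rw [hD0]; exact le_max_left _ _
  have hCb1 : D 1 ≤ C * r := by
    rw [hD1]
    have h := le_max_right 1 ((p + x 0)/r)
    calc p + x 0 = ((p + x 0)/r) * r := by field_simp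
    _ ≤ C * r := by apply mul_le_mul_of_nonneg_right h hr0.le
  have hbound : ∀ n, D n ≤ C * r^n := by
    have key : ∀ n, D n ≤ C * r^n ∧ D (n+1) ≤ C * r^(n+1) := by
      intro n
      induction n with
      | zero => exact ⟨by simpa using hCb0, by simpa using hCb1⟩
      | succ n ih =>
        refine ⟨ih.2, ?_⟩
        rw [hDrec]
        have hrn : (0:ℝ) < r^n := by positivity
        have h1 := ih.1
        have h2 := ih.2
        have : p * D (n+1) + q * D n ≤ p * (C * r^(n+1)) + q * (C * r^n) := by
          nlinarith
        calc p * D (n+1) + q * D n ≤ p * (C * r^(n+1)) + q * (C * r^n) := this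
        _ = C * r^n * (p * r + q) := by ring
        _ ≤ C * r^n * r^2 := by
            apply mul_le_mul_of_nonneg_left hroot (by positivity)
        _ = C * r^(n+1+1) := by ring
    exact fun n => (key n).1
  -- comparison with a divergent geometric sequence
  have hqr : 1 < q / r := (one_lt_div hr0).mpr hrq
  have htend : Filter.Tendsto (fun n : ℕ => (x 0 / C) * (q/r)^n)
      Filter.atTop Filter.atTop := by
    apply Filter.Tendsto.const_mul_atTop (by positivity)
    exact tendsto_pow_atTop_atTop_of_one_lt hqr
  apply Filter.tendsto_atTop_mono _ htend
  intro n
  have hprodpos : 0 < ∏ i ∈ Finset.range (n+1), x i :=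
    Finset.prod_pos fun i _ => hxpos i
  rw [abs_of_pos hprodpos, hprod n]
  have hDn := hDpos n
  have hDb := hbound n
  have hrn : (0:ℝ) < r^n := by positivity
  have h1 : (x 0 / C) * (q/r)^n = q^n * x 0 / (C * r^n) := by
    rw [div_pow]
    field_simp
  rw [h1]
  apply div_le_div_of_nonneg_left (by positivity) hDn hDb
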